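/- Let ζ = {z_m} be an ε-chain in 𝔻 (so ρ(z_i,z_j) ≥ ε for i ≠ j) with interpolation characteristic δ(ζ) > 0. Fix r = ε/4 and N ≥ 1, and for each m let z_{m,1},…,z_{m,N} be N equally spaced (with respect to ρ) points on the boundary of the pseudohyperbolic disk D(z_m, r). Then the combined sequence ζ' = {z_{m,j}} satisfies δ(ζ') = inf_{(m₁,j₁)} [∏_{j=1}^{N} ∏_{m ≠ m₁} ρ(z_{m₁,j₁}, z_{m,j})] · N·r^{N−1}·(1−r²)/(1−r^{2N}). -/

import Mathlib

open Metric

/-- The pseudohyperbolic metric on the unit disk. -/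
noncomputable def pRho (z w : ℂ) : ℝ :=
  ‖(z - w) / (1 - (starRingEnd ℂ) w * z)‖

/-- The interpolation characteristic `δ(ζ) = inf_k ∏_{j≠k} ρ(z_j, z_k)` of a sequence. -/
noncomputable def charSeq {ι : Type*} (z : ι → ℂ) : ℝ :=
  ⨅ k : ι, ∏' j : {j : ι // j ≠ k}, pRho (z j) (z k)

lemma normSq_key (z w : ℂ) :
    Complex.normSq (1 - (starRingEnd ℂ) w * z)
      = Complex.normSq (z - w) + (1 - Complex.normSq z) * (1 - Complex.normSq w) := by
  have h : ((Complex.normSq (1 - (starRingEnd ℂ) w * z) : ℝ) : ℂ)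
      = ((Complex.normSq (z - w) + (1 - Complex.normSq z) * (1 - Complex.normSq w) : ℝ) : ℂ) := by
    push_cast
    rw [← Complex.mul_conj, ← Complex.mul_conj, ← Complex.mul_conj, ← Complex.mul_conj]
    simp only [map_sub, map_mul, map_one, Complex.conj_conj]
    ring
  exact_mod_cast h

lemma normSq_lt_one {z : ℂ} (hz : ‖z‖ < 1) : Complex.normSq z < 1 := by
  have h := Complex.sq_norm z
  nlinarith [norm_nonneg z]

lemma one_sub_conj_mul_normSq_pos {z w : ℂ} (hz : ‖z‖ < 1) (hw : ‖w‖ < 1) :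
    0 < Complex.normSq (1 - (starRingEnd ℂ) w * z) := by
  have h := normSq_key z w
  have h1 := normSq_lt_one hz
  have h2 := normSq_lt_one hw
  nlinarith [Complex.normSq_nonneg (z - w)]

lemma one_sub_conj_mul_ne_zero {z w : ℂ} (hz : ‖z‖ < 1) (hw : ‖w‖ < 1) :
    (1 : ℂ) - (starRingEnd ℂ) w * z ≠ 0 :=
  Complex.normSq_pos.mp (one_sub_conj_mul_normSq_pos hz hw)

lemma pRho_lt_one {z w : ℂ} (hz : ‖z‖ < 1) (hw : ‖w‖ < 1) :
    pRho z w < 1 := by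
  have hpos := one_sub_conj_mul_normSq_pos hz hw
  have hkey := normSq_key z w
  have h1 := normSq_lt_one hz
  have h2 := normSq_lt_one hw
  rw [pRho, norm_div, div_lt_one (norm_pos_iff.mpr (Complex.normSq_pos.mp hpos))]
  rw [Complex.norm_def, Complex.norm_def]
  apply Real.sqrt_lt_sqrt (Complex.normSq_nonneg _)
  nlinarith

lemma pRho_nonneg (z w : ℂ) : 0 ≤ pRho z w := norm_nonneg _

lemma mobius_abs_lt {z a : ℂ} (hz : ‖z‖ < 1) (ha : ‖a‖ < 1) :
    ‖(a + z) / (1 + (starRingEnd ℂ) z * a)‖ < 1 := by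
  have h := pRho_lt_one ha (show ‖-z‖ < 1 by simpa using hz)
  simpa [pRho, sub_neg_eq_add] using h

lemma pRho_mobius {z a b : ℂ} (hz : ‖z‖ < 1) (ha : ‖a‖ < 1)
    (hb : ‖b‖ < 1) :
    pRho ((a + z) / (1 + (starRingEnd ℂ) z * a)) ((b + z) / (1 + (starRingEnd ℂ) z * b))
      = pRho a b := by
  have hz' : ‖-z‖ < 1 := by simpa using hz
  have hA : (1 : ℂ) + (starRingEnd ℂ) z * a ≠ 0 := by
    have := one_sub_conj_mul_ne_zero ha hz'
    simpa [sub_neg_eq_add] using this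
  have hB : (1 : ℂ) + (starRingEnd ℂ) z * b ≠ 0 := by
    have := one_sub_conj_mul_ne_zero hb hz'
    simpa [sub_neg_eq_add] using this
  have hB' : (1 : ℂ) + z * (starRingEnd ℂ) b ≠ 0 := by
    intro h
    apply hB
    have : (starRingEnd ℂ) ((1 : ℂ) + z * (starRingEnd ℂ) b) = 0 := by rw [h]; simp
    simpa [map_add, map_mul, Complex.conj_conj, mul_comm] using this
  have hzz : (1 : ℂ) - z * (starRingEnd ℂ) z ≠ 0 := by
    have h := normSq_lt_one hz
    rw [Complex.mul_conj]
    intro hc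
    have h1 : (Complex.normSq z : ℂ) = 1 := by linear_combination -hc
    have h2 : Complex.normSq z = 1 := by exact_mod_cast h1
    linarith
  have hba : (1 : ℂ) - (starRingEnd ℂ) b * a ≠ 0 := one_sub_conj_mul_ne_zero ha hb
  have hnum : (a + z) / (1 + (starRingEnd ℂ) z * a) - (b + z) / (1 + (starRingEnd ℂ) z * b)
      = (a - b) * (1 - z * (starRingEnd ℂ) z)
        / ((1 + (starRingEnd ℂ) z * a) * (1 + (starRingEnd ℂ) z * b)) := by
    rw [div_sub_div _ _ hA hB]
    congr 1
    ring
  have hden : 1 - (starRingEnd ℂ) ((b + z) / (1 + (starRingEnd ℂ) z * b))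
        * ((a + z) / (1 + (starRingEnd ℂ) z * a))
      = (1 - (starRingEnd ℂ) b * a) * (1 - z * (starRingEnd ℂ) z)
        / ((1 + z * (starRingEnd ℂ) b) * (1 + (starRingEnd ℂ) z * a)) := by
    simp only [map_div₀, map_add, map_mul, map_one, Complex.conj_conj]
    rw [div_mul_div_comm, one_sub_div (mul_ne_zero hB' hA)]
    congr 1
    ring
  rw [pRho, hnum, hden]
  have hq : (a - b) * (1 - z * (starRingEnd ℂ) z)
        / ((1 + (starRingEnd ℂ) z * a) * (1 + (starRingEnd ℂ) z * b))
        / ((1 - (starRingEnd ℂ) b * a) * (1 - z * (starRingEnd ℂ) z)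
          / ((1 + z * (starRingEnd ℂ) b) * (1 + (starRingEnd ℂ) z * a)))
      = (a - b) / (1 - (starRingEnd ℂ) b * a)
        * ((1 + z * (starRingEnd ℂ) b) / (1 + (starRingEnd ℂ) z * b)) := by
    rw [div_div_div_eq, div_mul_div_comm, div_eq_div_iff
      (mul_ne_zero (mul_ne_zero hA hB) (mul_ne_zero hba hzz)) (mul_ne_zero hba hB)]
    ring
  rw [hq, norm_mul, pRho]
  have habs : ‖(1 + z * (starRingEnd ℂ) b) / (1 + (starRingEnd ℂ) z * b)‖ = 1 := by
    have hc : (1 : ℂ) + z * (starRingEnd ℂ) b = (starRingEnd ℂ) (1 + (starRingEnd ℂ) z * b) := by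
      simp [map_add, map_mul, Complex.conj_conj, mul_comm]
    rw [norm_div, hc, Complex.norm_conj, div_self (norm_ne_zero_iff.mpr hB)]
  rw [habs, mul_one]

open Polynomial in
lemma prod_one_sub_pow {N : ℕ} (hN : 0 < N) {μ : ℂ} (hμ : IsPrimitiveRoot μ N) :
    ∏ i ∈ (Finset.range N).erase 0, ((1 : ℂ) - μ ^ i) = (N : ℂ) := by
  have hid : (X : ℂ[X]) ^ N - C 1 = ∏ i ∈ Finset.range N, (X - C (μ ^ i * 1)) :=
    X_pow_sub_C_eq_prod hμ hN (one_pow N)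
  simp only [mul_one] at hid
  have hsplit : ∏ i ∈ Finset.range N, ((X : ℂ[X]) - C (μ ^ i))
      = ((X : ℂ[X]) - C 1) * ∏ i ∈ (Finset.range N).erase 0, (X - C (μ ^ i)) := by
    rw [← Finset.mul_prod_erase (Finset.range N) _ (Finset.mem_range.mpr hN)]
    simp
  have hgeom : ((X : ℂ[X]) - C 1) * ∑ i ∈ Finset.range N, X ^ i = X ^ N - C 1 := by
    have := geom_sum_mul (X : ℂ[X]) N
    rw [mul_comm] at this
    simpa using this
  have hQ : ∏ i ∈ (Finset.range N).erase 0, ((X : ℂ[X]) - C (μ ^ i))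
      = ∑ i ∈ Finset.range N, X ^ i := by
    apply mul_left_cancel₀ (X_sub_C_ne_zero (1 : ℂ))
    rw [← hsplit, ← hid, hgeom]
  have := congrArg (Polynomial.eval (1 : ℂ)) hQ
  simpa [Polynomial.eval_prod, Polynomial.eval_finset_sum] using this

open Polynomial in
lemma prod_one_sub_smul_pow {N : ℕ} (hN : 0 < N) {μ : ℂ} (hμ : IsPrimitiveRoot μ N) (s : ℂ) :
    ∏ i ∈ Finset.range N, ((1 : ℂ) - s * μ ^ i) = 1 - s ^ N := by
  have hid : (X : ℂ[X]) ^ N - C (s ^ N) = ∏ i ∈ Finset.range N, (X - C (μ ^ i * s)) :=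
    X_pow_sub_C_eq_prod hμ hN rfl
  have := congrArg (Polynomial.eval (1 : ℂ)) hid
  simp only [Polynomial.eval_prod, Polynomial.eval_sub, Polynomial.eval_pow, Polynomial.eval_X,
    Polynomial.eval_C, Polynomial.eval_one] at this
  rw [show ∏ i ∈ Finset.range N, ((1:ℂ) - s * μ ^ i) = ∏ i ∈ Finset.range N, ((1:ℂ) - μ ^ i * s)
    from Finset.prod_congr rfl fun i _ => by ring, ← this, one_pow]

lemma abs_eq_one_of_pow_eq_one {z : ℂ} {n : ℕ} (hn : n ≠ 0) (h : z ^ n = 1) :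
    ‖z‖ = 1 := by
  have h1 : ‖z‖ ^ n = 1 := by rw [← norm_pow, h, norm_one]
  rcases lt_trichotomy (‖z‖) 1 with hlt | heq | hgt
  · exact absurd h1 (by nlinarith [pow_lt_one₀ (norm_nonneg z) hlt hn])
  · exact heq
  · exact absurd h1 (by nlinarith [one_lt_pow₀ hgt hn])

lemma same_m_prod {N : ℕ} (hN : 1 ≤ N) {μ : ℂ} (hprim : IsPrimitiveRoot μ N)
    {r : ℝ} (hr0 : 0 < r) (hr1 : r < 1)
    (c : ℂ) (hc : ‖c‖ = 1) (k : Fin N) :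
    ∏ j ∈ Finset.univ.erase k,
      pRho ((r:ℂ) * (c * μ ^ (j:ℕ))) ((r:ℂ) * (c * μ ^ (k:ℕ)))
      = N * r ^ (N-1) * (1 - r^2) / (1 - r^(2*N)) := by
  have hN0 : N ≠ 0 := by omega
  have hNpos : 0 < N := by omega
  have hμN : μ ^ N = 1 := hprim.pow_eq_one
  have habsμ : ‖μ‖ = 1 := abs_eq_one_of_pow_eq_one hN0 hμN
  have hμ0 : μ ≠ 0 := fun h => by simp [h] at habsμ
  have hr2 : (0:ℝ) < 1 - r^2 := by nlinarith
  have hr2N : (0:ℝ) < 1 - r^(2*N) := by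
    have : r^(2*N) < 1 := pow_lt_one₀ hr0.le hr1 (by omega)
    linarith
  set g : ℕ → ℝ := fun i =>
    r * ‖1 - μ^i‖ / ‖1 - (r:ℂ)^2 * μ^i‖ with hg
  have hfac : ∀ j : Fin N,
      pRho ((r:ℂ) * (c * μ ^ (j:ℕ))) ((r:ℂ) * (c * μ ^ (k:ℕ)))
        = g (((j:ℕ) + (N - (k:ℕ))) % N) := by
    intro j
    set d : ℕ := ((j:ℕ) + (N - (k:ℕ))) % N with hd
    have hkd : μ^(k:ℕ) * μ^d = μ^(j:ℕ) := by
      rw [hd, ← pow_eq_pow_mod _ hμN, ← pow_add,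
        show (k:ℕ) + ((j:ℕ) + (N - (k:ℕ))) = (j:ℕ) + N by omega, pow_add, hμN, mul_one]
    have hcc : (starRingEnd ℂ) c * c = 1 := by
      rw [mul_comm, Complex.mul_conj, Complex.normSq_eq_norm_sq, hc]; norm_num
    have hck : (starRingEnd ℂ) (μ^(k:ℕ)) * μ^(j:ℕ) = μ^d := by
      rw [← Complex.inv_eq_conj (by rw [norm_pow, habsμ, one_pow])]
      apply mul_left_cancel₀ (pow_ne_zero (k:ℕ) hμ0)
      rw [← mul_assoc, mul_inv_cancel₀ (pow_ne_zero (k:ℕ) hμ0), one_mul, hkd]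
    have hnum : (r:ℂ)*(c*μ^(j:ℕ)) - (r:ℂ)*(c*μ^(k:ℕ))
        = ((r:ℂ)*(c*μ^(k:ℕ))) * (μ^d - 1) := by
      linear_combination (-(r:ℂ)) * c * hkd
    have hden : 1 - (starRingEnd ℂ) ((r:ℂ)*(c*μ^(k:ℕ))) * ((r:ℂ)*(c*μ^(j:ℕ)))
        = 1 - (r:ℂ)^2 * μ^d := by
      simp only [map_mul, Complex.conj_ofReal]
      calc 1 - (r:ℝ) * ((starRingEnd ℂ) c * (starRingEnd ℂ) (μ^(k:ℕ)))
            * ((r:ℝ) * (c * μ^(j:ℕ)))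
          = 1 - (r:ℂ)^2 * (((starRingEnd ℂ) c * c) * ((starRingEnd ℂ) (μ^(k:ℕ)) * μ^(j:ℕ))) := by
            ring
        _ = 1 - (r:ℂ)^2 * μ^d := by rw [hcc, hck]; ring
    rw [pRho, hnum, hden, norm_div, norm_mul, norm_mul, norm_mul]
    rw [Complex.norm_real, Real.norm_eq_abs, abs_of_pos hr0, hc, norm_pow, habsμ, one_pow,
      norm_sub_rev]
    rw [hg]
    ring
  have hbij : ∏ j ∈ Finset.univ.erase k, g (((j:ℕ) + (N - (k:ℕ))) % N)
      = ∏ i ∈ (Finset.range N).erase 0, g i := by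
    apply Finset.prod_nbij' (fun j : Fin N => ((j:ℕ) + (N - (k:ℕ))) % N)
      (fun i => (⟨(i + (k:ℕ)) % N, Nat.mod_lt _ hNpos⟩ : Fin N))
    · intro j hj
      rw [Finset.mem_erase] at hj ⊢
      refine ⟨?_, Finset.mem_range.mpr (Nat.mod_lt _ hNpos)⟩
      intro hzero
      obtain ⟨q, hq⟩ := Nat.dvd_of_mod_eq_zero hzero
      have hjk : (j:ℕ) ≠ (k:ℕ) := fun h => hj.1 (Fin.ext h)
      have hj' := j.isLt
      have hk' := k.isLt
      rcases q with _ | _ | q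
      · omega
      · omega
      · have h5 : N * (q + 1 + 1) = N * q + N + N := by ring
        omega
    · intro i hi
      rw [Finset.mem_erase] at hi ⊢
      refine ⟨?_, Finset.mem_univ _⟩
      intro hik
      have h1 : (i + (k:ℕ)) % N = (k:ℕ) := congrArg Fin.val hik
      have h2 : i ∈ Finset.range N := hi.2
      rw [Finset.mem_range] at h2
      have h3 : (i + (k:ℕ)) % N = (0 + (k:ℕ)) % N := by
        rw [h1, Nat.zero_add, Nat.mod_eq_of_lt k.isLt]
      have h4 : i % N = 0 % N := Nat.ModEq.add_right_cancel' (k:ℕ) h3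
      rw [Nat.mod_eq_of_lt h2, Nat.zero_mod] at h4
      exact hi.1 h4
    · intro j hj
      apply Fin.ext
      show (((j:ℕ) + (N - (k:ℕ))) % N + (k:ℕ)) % N = (j:ℕ)
      rw [Nat.mod_add_mod, show (j:ℕ) + (N - (k:ℕ)) + (k:ℕ) = (j:ℕ) + N by omega,
        Nat.add_mod_right, Nat.mod_eq_of_lt j.isLt]
    · intro i hi
      rw [Finset.mem_erase, Finset.mem_range] at hi
      show ((i + (k:ℕ)) % N + (N - (k:ℕ))) % N = i
      rw [Nat.mod_add_mod, show i + (k:ℕ) + (N - (k:ℕ)) = i + N by omega,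
        Nat.add_mod_right, Nat.mod_eq_of_lt hi.2]
    · intro j hj; rfl
  have hprodA : ∏ i ∈ (Finset.range N).erase 0, ‖1 - μ^i‖ = (N:ℝ) := by
    rw [← norm_prod, prod_one_sub_pow hNpos hprim]
    simp
  have hprodB : ∏ i ∈ (Finset.range N).erase 0, ‖1 - (r:ℂ)^2 * μ^i‖
      = (1 - r^(2*N)) / (1 - r^2) := by
    have hsplit : ((1:ℂ) - (r:ℂ)^2) * ∏ i ∈ (Finset.range N).erase 0, (1 - (r:ℂ)^2 * μ^i)
        = 1 - ((r:ℂ)^2)^N := by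
      rw [← prod_one_sub_smul_pow hNpos hprim ((r:ℂ)^2),
        ← Finset.mul_prod_erase (Finset.range N) _ (Finset.mem_range.mpr hNpos)]
      simp
    have h1 : ∏ i ∈ (Finset.range N).erase 0, ((1:ℂ) - (r:ℂ)^2 * μ^i)
        = (1 - ((r:ℂ)^2)^N) / (1 - (r:ℂ)^2) := by
      rw [eq_div_iff (by
        intro h
        have h6 : ((r:ℝ)^2 : ℂ) = 1 := by push_cast; linear_combination -h
        have h7 : (r:ℝ)^2 = 1 := by exact_mod_cast h6
        nlinarith), mul_comm, hsplit]
    rw [← norm_prod, h1]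
    rw [show (1 - ((r:ℂ)^2)^N) / (1 - (r:ℂ)^2) = (((1 - r^(2*N)) / (1 - r^2) : ℝ) : ℂ) by
      push_cast; rw [← pow_mul]]
    rw [Complex.norm_real, Real.norm_eq_abs, abs_of_pos (by positivity)]
  calc ∏ j ∈ Finset.univ.erase k,
        pRho ((r:ℂ) * (c * μ ^ (j:ℕ))) ((r:ℂ) * (c * μ ^ (k:ℕ)))
      = ∏ j ∈ Finset.univ.erase k, g (((j:ℕ) + (N - (k:ℕ))) % N) :=
        Finset.prod_congr rfl (fun j _ => hfac j)
    _ = ∏ i ∈ (Finset.range N).erase 0, g i := hbij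
    _ = (∏ i ∈ (Finset.range N).erase 0, (r * ‖1 - μ^i‖))
          / ∏ i ∈ (Finset.range N).erase 0, ‖1 - (r:ℂ)^2 * μ^i‖ := by
        rw [← Finset.prod_div_distrib]
    _ = r^(N-1) * (N:ℝ) / ((1 - r^(2*N)) / (1 - r^2)) := by
        rw [Finset.prod_mul_distrib, Finset.prod_const, hprodA, hprodB,
          Finset.card_erase_of_mem (Finset.mem_range.mpr hNpos), Finset.card_range]
    _ = N * r ^ (N-1) * (1 - r^2) / (1 - r^(2*N)) := by
        rw [div_div_eq_mul_div]
        ring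

lemma multipliable_of_le_one {ι : Type*} {f : ι → ℝ} (h0 : ∀ i, 0 ≤ f i) (h1 : ∀ i, f i ≤ 1) :
    Multipliable f := by
  classical
  refine ⟨⨅ s : Finset ι, ∏ i ∈ s, f i, ?_⟩
  apply tendsto_atTop_ciInf
  · intro s t hst
    calc ∏ i ∈ t, f i = (∏ i ∈ t \ s, f i) * ∏ i ∈ s, f i := (Finset.prod_sdiff hst).symm
      _ ≤ 1 * ∏ i ∈ s, f i := by
          apply mul_le_mul_of_nonneg_right _ (Finset.prod_nonneg fun i _ => h0 i)
          exact Finset.prod_le_one (fun i _ => h0 i) (fun i _ => h1 i)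
      _ = ∏ i ∈ s, f i := one_mul _
  · exact ⟨0, fun x ⟨s, hs⟩ => hs ▸ Finset.prod_nonneg fun i _ => h0 i⟩

lemma tprod_ne_split {M K : Type*} [Fintype K] [DecidableEq K] [DecidableEq M]
    (f : M × K → ℝ) (h0 : ∀ q, 0 ≤ f q) (h1 : ∀ q, f q ≤ 1) (p : M × K) :
    ∏' q : {q : M × K // q ≠ p}, f q
      = (∏' q : {q : M × K // q.1 ≠ p.1}, f q)
          * ∏ j ∈ Finset.univ.erase p.2, f (p.1, j) := by
  classical
  set S : Set (M × K) := {q | q.1 ≠ p.1} with hS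
  set T : Set (M × K) := {q | q.1 = p.1 ∧ q ≠ p} with hT
  have hmem : ∀ q : M × K, q ∈ S ∪ T ↔ q ≠ p := by
    intro q
    constructor
    · rintro (h | h)
      · exact fun hq => h (by rw [hq])
      · exact h.2
    · intro h
      by_cases hq : q.1 = p.1
      · exact Or.inr ⟨hq, h⟩
      · exact Or.inl hq
  have hd : Disjoint S T := by
    rw [Set.disjoint_left]
    rintro q hq ⟨hq1, -⟩
    exact hq hq1
  have hmS : Multipliable ((fun q => f q) ∘ ((↑) : S → M × K)) :=
    multipliable_of_le_one (fun i => h0 _) (fun i => h1 _)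
  have hmT : Multipliable ((fun q => f q) ∘ ((↑) : T → M × K)) :=
    multipliable_of_le_one (fun i => h0 _) (fun i => h1 _)
  have h1' : ∏' q : {q : M × K // q ≠ p}, f q = ∏' q : ↑(S ∪ T), f q :=
    ((Equiv.tprod_eq (Equiv.subtypeEquivRight hmem)
      (fun q : {q : M × K // q ≠ p} => f q)).symm).trans (tprod_congr (fun c => rfl))
  rw [h1', Multipliable.tprod_union_disjoint hd hmS hmT]
  congr 1
  · rw [← Equiv.tprod_eq
      ({ toFun := fun j => ⟨(p.1, j.1), rfl, fun h => j.2 (congrArg Prod.snd h)⟩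
         invFun := fun q => ⟨q.1.2, fun h => q.2.2 (Prod.ext q.2.1 h)⟩
         left_inv := fun j => rfl
         right_inv := fun q => Subtype.ext (Prod.ext q.2.1.symm rfl) } :
            {j : K // j ≠ p.2} ≃ ↑T) (fun q : ↑T => f ↑q), tprod_fintype,
      Finset.prod_subtype (Finset.univ.erase p.2)
        (p := fun j => j ≠ p.2) (fun x => by simp) (fun j => f (p.1, j))]
    exact Finset.prod_congr rfl (fun b _ => rfl)

/-- If `ζ` is an `ε`-separated sequence and `ζ' = {z_{m,j}}` consists, for each `m`, of
`N` equally spaced (w.r.t. `ρ`) points on the boundary of the pseudohyperbolic disk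
`D(z_m, r)` with `r = ε/4`, then
`δ(ζ') = inf_{(m₁,j₁)} [∏_{j=1}^{N} ∏_{m ≠ m₁} ρ(z_{m₁,j₁}, z_{m,j})] · N r^{N−1}(1−r²)/(1−r^{2N})`. -/
theorem charSeq_of_equally_spaced_enrichment
    (ζ : ℕ → ℂ) (hζ : ∀ m, ζ m ∈ ball (0 : ℂ) 1)
    (ε : ℝ) (hε : ε ∈ Set.Ioo (0:ℝ) 1)
    (hsep : ∀ i j : ℕ, i ≠ j → ε ≤ pRho (ζ i) (ζ j))
    (hδ : 0 < charSeq ζ)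
    (r : ℝ) (hr : r = ε / 4) (N : ℕ) (hN : 1 ≤ N)
    (ω : ℕ → Fin N → ℂ) (hωabs : ∀ m j, ‖ω m j‖ = 1)
    (hωsp : ∀ m j, ω m j = ω m ⟨0, hN⟩ * Complex.exp (2 * Real.pi * Complex.I * (j : ℕ) / N))
    (ζ' : ℕ × Fin N → ℂ)
    (hζ' : ∀ m j, ζ' (m, j) =
      ((r : ℂ) * ω m j + ζ m) / (1 + (starRingEnd ℂ) (ζ m) * ((r : ℂ) * ω m j))) :
    charSeq ζ' =
      (⨅ p : ℕ × Fin N, ∏' q : {q : ℕ × Fin N // q.1 ≠ p.1}, pRho (ζ' q) (ζ' p)) *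
        (N * r ^ (N - 1) * (1 - r ^ 2) / (1 - r ^ (2 * N))) := by
  classical
  obtain ⟨hε0, hε1⟩ := hε
  have hr0 : 0 < r := by rw [hr]; linarith
  have hr1 : r < 1 := by rw [hr]; linarith
  have hN0 : N ≠ 0 := by omega
  set μ : ℂ := Complex.exp (2 * Real.pi * Complex.I / N) with hμ
  have hprim : IsPrimitiveRoot μ N := Complex.isPrimitiveRoot_exp N hN0
  have hμpow : ∀ j : Fin N, Complex.exp (2 * Real.pi * Complex.I * (j : ℕ) / N) = μ ^ (j:ℕ) := by
    intro j
    rw [hμ, ← Complex.exp_nat_mul]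
    congr 1
    ring
  have hω : ∀ m (j : Fin N), ω m j = ω m ⟨0, hN⟩ * μ ^ (j:ℕ) := by
    intro m j
    rw [hωsp m j, hμpow j]
  have hζm : ∀ m, ‖ζ m‖ < 1 := by
    intro m
    have := hζ m
    rwa [mem_ball, Complex.dist_eq, sub_zero] at this
  have hrω : ∀ m (j : Fin N), ‖(r:ℂ) * ω m j‖ < 1 := by
    intro m j
    rw [norm_mul, Complex.norm_real, Real.norm_eq_abs, hωabs, mul_one, abs_of_pos hr0]
    exact hr1
  have hζ'mem : ∀ q : ℕ × Fin N, ‖ζ' q‖ < 1 := by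
    rintro ⟨m, j⟩
    rw [hζ' m j]
    exact mobius_abs_lt (hζm m) (hrω m j)
  set C : ℝ := N * r ^ (N - 1) * (1 - r ^ 2) / (1 - r ^ (2 * N)) with hC
  have hC0 : 0 ≤ C := by
    have h2N : r ^ (2*N) < 1 := pow_lt_one₀ hr0.le hr1 (by omega)
    have h2 : (0:ℝ) < 1 - r^2 := by nlinarith
    have hNpos : (0:ℝ) ≤ N := by positivity
    apply div_nonneg (mul_nonneg (mul_nonneg hNpos (by positivity)) h2.le) (by linarith)
  have hsame : ∀ p : ℕ × Fin N,
      ∏ j ∈ Finset.univ.erase p.2, pRho (ζ' (p.1, j)) (ζ' p) = C := by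
    rintro ⟨m, k⟩
    have heach : ∀ j : Fin N, pRho (ζ' (m, j)) (ζ' (m, k))
        = pRho ((r:ℂ) * (ω m ⟨0, hN⟩ * μ ^ (j:ℕ))) ((r:ℂ) * (ω m ⟨0, hN⟩ * μ ^ (k:ℕ))) := by
      intro j
      rw [hζ' m j, hζ' m k, pRho_mobius (hζm m) (hrω m j) (hrω m k), hω m j, hω m k]
    calc ∏ j ∈ Finset.univ.erase k, pRho (ζ' (m, j)) (ζ' (m, k))
        = ∏ j ∈ Finset.univ.erase k,
            pRho ((r:ℂ) * (ω m ⟨0, hN⟩ * μ ^ (j:ℕ))) ((r:ℂ) * (ω m ⟨0, hN⟩ * μ ^ (k:ℕ))) :=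
          Finset.prod_congr rfl (fun j _ => heach j)
      _ = C := same_m_prod hN hprim hr0 hr1 _ (hωabs m ⟨0, hN⟩) k
  have hsplit : ∀ p : ℕ × Fin N,
      (∏' q : {q : ℕ × Fin N // q ≠ p}, pRho (ζ' q) (ζ' p))
        = (∏' q : {q : ℕ × Fin N // q.1 ≠ p.1}, pRho (ζ' q) (ζ' p)) * C := by
    intro p
    rw [tprod_ne_split (fun q => pRho (ζ' q) (ζ' p))
      (fun q => pRho_nonneg _ _) (fun q => (pRho_lt_one (hζ'mem q) (hζ'mem p)).le) p,
      hsame p]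
  rw [charSeq]
  calc (⨅ k : ℕ × Fin N, ∏' j : {j : ℕ × Fin N // j ≠ k}, pRho (ζ' j) (ζ' k))
      = ⨅ p : ℕ × Fin N,
          (∏' q : {q : ℕ × Fin N // q.1 ≠ p.1}, pRho (ζ' q) (ζ' p)) * C :=
        iInf_congr hsplit
    _ = (⨅ p : ℕ × Fin N, ∏' q : {q : ℕ × Fin N // q.1 ≠ p.1}, pRho (ζ' q) (ζ' p)) * C :=
        (Real.iInf_mul_of_nonneg hC0 _).symm
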